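/- Let λ, u, v ∈ ℂ with u ≠ 0 and v ≠ 0, and define U = v + λ(1 − v/u) and V = u + λ(u/v − 1) (the Hirota KdV map). If moreover U ≠ 0 and V ≠ 0, then V + λ(1 − V/U) = u and U + λ(U/V − 1) = v; that is, applying the map again to (U,V) returns (u,v), so the Hirota KdV map is an involution. -/

import Mathlib

/-- The Hirota KdV map is an involution. -/
theorem stmt_1 (lam u v U V : ℂ) (hu : u ≠ 0) (hv : v ≠ 0)
    (hU : U = v + lam * (1 - v / u)) (hV : V = u + lam * (u / v - 1))
    (hU0 : U ≠ 0) (hV0 : V ≠ 0) :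
    V + lam * (1 - V / U) = u ∧ U + lam * (U / V - 1) = v := by
  have h1 : u * v + u * lam - v * lam ≠ 0 := by
    intro h
    apply hU0
    rw [hU]
    field_simp
    linear_combination h
  subst hU hV
  constructor
  · field_simp
    ring_nf
    linear_combination (-(u * lam)) * mul_inv_cancel₀ h1
  · field_simp
    ring_nf
    linear_combination (v * lam) * mul_inv_cancel₀ h1
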